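/- arXiv:1705.08916 — 5 statements merged into one kernel-verified Lean document; each statement's English description precedes it below -/
import Mathlib

section
/- Let G be a polynomial with G ≥ 0 on [0,1] and ‖G‖_{L¹[0,1]} > 0. Then there exists a polynomial 𝒰 with 𝒰(x) ∈ [0,1] for all x ∈ [0,1], and deg 𝒰 = deg G + 1, such that ‖𝒰G‖_{L¹} = ‖(1−𝒰)G‖_{L¹} = ½‖G‖_{L¹} and ‖𝒰G − (1−𝒰)G‖_{L¹} = ½‖G‖_{L¹}. -/
open MeasureTheory Set intervalIntegral Polynomial

noncomputable def antider (p : Polynomial ℝ) : Polynomial ℝ :=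
  p.sum fun n a => C (a / (n+1)) * X ^ (n+1)

lemma antider_derivative (p : Polynomial ℝ) : (antider p).derivative = p := by
  unfold antider Polynomial.sum
  rw [map_sum]
  conv_rhs => rw [p.as_sum_support]
  refine Finset.sum_congr rfl fun n _ => ?_
  rw [derivative_C_mul_X_pow]
  have h1 : ((n:ℝ)+1) ≠ 0 := by positivity
  rw [Nat.add_sub_cancel]
  push_cast
  rw [div_mul_cancel₀ _ h1]
  rw [← C_mul_X_pow_eq_monomial]

lemma antider_eval_zero (p : Polynomial ℝ) : (antider p).eval 0 = 0 := by
  unfold antider Polynomial.sum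
  simp [Polynomial.eval_finset_sum]

lemma poly_ftc (p : Polynomial ℝ) (a b : ℝ) :
    ∫ x in a..b, p.derivative.eval x = p.eval b - p.eval a :=
  intervalIntegral.integral_eq_sub_of_hasDerivAt (f := fun x => p.eval x)
    (f' := fun x => p.derivative.eval x) (fun x _ => p.hasDerivAt x)
    ((p.derivative.continuous).intervalIntegrable _ _)

/-- Splitting lemma: if `G` is a polynomial, `G ≥ 0` on `[0,1]`, with
`‖G‖_{L¹[0,1]} > 0`, then there is a polynomial `𝒰` of degree `deg G + 1`
with values in `[0,1]` on `[0,1]` such that `𝒰G` and `(1−𝒰)G` each have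
`L¹`-norm `½‖G‖` and `‖𝒰G − (1−𝒰)G‖ = ½‖G‖`. -/
theorem splitting_lemma (G : Polynomial ℝ)
    (hG0 : ∀ x ∈ Icc (0:ℝ) 1, 0 ≤ G.eval x)
    (hGpos : 0 < ∫ x in (0:ℝ)..1, |G.eval x|) :
    ∃ U : Polynomial ℝ,
      (∀ x ∈ Icc (0:ℝ) 1, U.eval x ∈ Icc (0:ℝ) 1) ∧
      U.natDegree = G.natDegree + 1 ∧
      (∫ x in (0:ℝ)..1, |U.eval x * G.eval x|
        = (1/2) * ∫ x in (0:ℝ)..1, |G.eval x|) ∧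
      (∫ x in (0:ℝ)..1, |(1 - U.eval x) * G.eval x|
        = (1/2) * ∫ x in (0:ℝ)..1, |G.eval x|) ∧
      (∫ x in (0:ℝ)..1, |U.eval x * G.eval x - (1 - U.eval x) * G.eval x|
        = (1/2) * ∫ x in (0:ℝ)..1, |G.eval x|) := by
  -- basic setup
  have habs : (∫ x in (0:ℝ)..1, |G.eval x|) = ∫ x in (0:ℝ)..1, G.eval x := by
    apply intervalIntegral.integral_congr
    intro x hx
    rw [uIcc_of_le (by norm_num : (0:ℝ) ≤ 1)] at hx
    exact abs_of_nonneg (hG0 x hx)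
  have hGne : G ≠ 0 := by
    rintro rfl
    simp at hGpos
  set I : ℝ := ∫ x in (0:ℝ)..1, G.eval x with hIdef
  rw [habs] at hGpos
  have hI : (0:ℝ) < I := hGpos
  have hIne : I ≠ 0 := ne_of_gt hI
  -- the polynomial U
  set Q : Polynomial ℝ := antider G with hQdef
  set U : Polynomial ℝ := C I⁻¹ * Q with hUdef
  have hQd : Q.derivative = G := antider_derivative G
  have hQ0 : Q.eval 0 = 0 := antider_eval_zero G
  have hftcG : ∀ a b : ℝ, (∫ x in a..b, G.eval x) = Q.eval b - Q.eval a := by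
    intro a b
    rw [← hQd]
    exact poly_ftc Q a b
  have hQ1 : Q.eval 1 = I := by
    have := hftcG 0 1
    rw [hQ0] at this
    linarith [this]
  have hUeval : ∀ x : ℝ, U.eval x = I⁻¹ * Q.eval x := by
    intro x; rw [hUdef]; simp
  have hU0 : U.eval 0 = 0 := by simp [hUeval, hQ0]
  have hU1 : U.eval 1 = 1 := by
    rw [hUeval, hQ1, inv_mul_cancel₀ hIne]
  -- monotonicity
  have hmono : ∀ x ∈ Icc (0:ℝ) 1, ∀ y ∈ Icc (0:ℝ) 1, x ≤ y → U.eval x ≤ U.eval y := by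
    intro x hx y hy hxy
    have hint : (0:ℝ) ≤ ∫ t in x..y, G.eval t := by
      apply intervalIntegral.integral_nonneg hxy
      intro t ht
      exact hG0 t ⟨le_trans hx.1 ht.1, le_trans ht.2 hy.2⟩
    rw [hftcG] at hint
    rw [hUeval, hUeval]
    have := inv_pos.mpr hI
    nlinarith
  -- range
  have hrange : ∀ x ∈ Icc (0:ℝ) 1, U.eval x ∈ Icc (0:ℝ) 1 := by
    intro x hx
    constructor
    · have := hmono 0 (by norm_num) x hx hx.1
      rwa [hU0] at this
    · have := hmono x hx 1 (by norm_num) hx.2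
      rwa [hU1] at this
  -- derivative of U
  have hUd : U.derivative = C I⁻¹ * G := by
    rw [hUdef, derivative_C_mul, hQd]
  -- degree
  have hUdne : U.natDegree ≠ 0 := by
    intro h
    have h2 : U.derivative = 0 := derivative_of_natDegree_zero h
    rw [hUd] at h2
    rcases mul_eq_zero.mp h2 with h3 | h3
    · exact inv_ne_zero hIne (C_eq_zero.mp h3)
    · exact hGne h3
  have hdeg : U.natDegree = G.natDegree + 1 := by
    have h1 : U.derivative.degree = (U.natDegree - 1 : ℕ) :=
      degree_derivative_eq U (Nat.pos_of_ne_zero hUdne)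
    have h2 : U.derivative.natDegree = U.natDegree - 1 := natDegree_eq_of_degree_eq_some h1
    rw [hUd, natDegree_C_mul (inv_ne_zero hIne)] at h2
    omega
  -- antiderivative of U*G : W = C (I/2) * U^2
  set W : Polynomial ℝ := C (I/2) * U^2 with hWdef
  have hWd' : W.derivative = U * G := by
    rw [hWdef, derivative_C_mul, derivative_pow, hUd, pow_one]
    have h1 : C (I/2) * (C (((2:ℕ)):ℝ) * U * (C I⁻¹ * G))
        = (C (I/2) * C (((2:ℕ)):ℝ) * C I⁻¹) * (U * G) := by ring
    rw [h1, ← C_mul, ← C_mul]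
    have h2 : I / 2 * (((2:ℕ)):ℝ) * I⁻¹ = 1 := by
      push_cast
      field_simp
    rw [h2, C_1, one_mul]
  have hftcUG : ∀ a b : ℝ, (∫ x in a..b, U.eval x * G.eval x)
      = (I/2) * (U.eval b)^2 - (I/2) * (U.eval a)^2 := by
    intro a b
    have : (∫ x in a..b, U.eval x * G.eval x) = ∫ x in a..b, W.derivative.eval x := by
      apply intervalIntegral.integral_congr
      intro x _
      rw [hWd']
      simp
    rw [this, poly_ftc, hWdef]
    simp only [eval_mul, eval_pow, eval_C]
  -- integrability facts
  have hintG : ∀ a b : ℝ, IntervalIntegrable (fun x => G.eval x) volume a b :=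
    fun a b => (G.continuous).intervalIntegrable a b
  have hintUG : ∀ a b : ℝ, IntervalIntegrable (fun x => U.eval x * G.eval x) volume a b :=
    fun a b => ((U.continuous).mul (G.continuous)).intervalIntegrable a b
  -- first integral
  have key1 : (∫ x in (0:ℝ)..1, U.eval x * G.eval x) = I/2 := by
    rw [hftcUG, hU0, hU1]
    ring
  have int1 : (∫ x in (0:ℝ)..1, |U.eval x * G.eval x|) = (1/2) * ∫ x in (0:ℝ)..1, |G.eval x| := by
    rw [habs]
    have : (∫ x in (0:ℝ)..1, |U.eval x * G.eval x|) = ∫ x in (0:ℝ)..1, U.eval x * G.eval x := by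
      apply intervalIntegral.integral_congr
      intro x hx
      rw [uIcc_of_le (by norm_num : (0:ℝ) ≤ 1)] at hx
      exact abs_of_nonneg (mul_nonneg (hrange x hx).1 (hG0 x hx))
    rw [this, key1]; ring
  -- second integral
  have key2 : (∫ x in (0:ℝ)..1, (1 - U.eval x) * G.eval x) = I/2 := by
    have heq : (∫ x in (0:ℝ)..1, (1 - U.eval x) * G.eval x)
        = ∫ x in (0:ℝ)..1, (G.eval x - U.eval x * G.eval x) := by
      apply intervalIntegral.integral_congr
      intro x _; ring
    rw [heq, intervalIntegral.integral_sub (hintG 0 1) (hintUG 0 1), key1, ← hIdef]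
    ring
  have int2 : (∫ x in (0:ℝ)..1, |(1 - U.eval x) * G.eval x|)
      = (1/2) * ∫ x in (0:ℝ)..1, |G.eval x| := by
    rw [habs]
    have : (∫ x in (0:ℝ)..1, |(1 - U.eval x) * G.eval x|)
        = ∫ x in (0:ℝ)..1, (1 - U.eval x) * G.eval x := by
      apply intervalIntegral.integral_congr
      intro x hx
      rw [uIcc_of_le (by norm_num : (0:ℝ) ≤ 1)] at hx
      exact abs_of_nonneg (mul_nonneg (by linarith [(hrange x hx).2]) (hG0 x hx))
    rw [this, key2]; ring
  -- third: find midpoint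
  obtain ⟨x₀, hx₀mem, hx₀⟩ : ∃ x₀ ∈ Icc (0:ℝ) 1, U.eval x₀ = 1/2 := by
    have hsub : Icc (U.eval 0) (U.eval 1) ⊆ (fun x => U.eval x) '' (Icc (0:ℝ) 1) :=
      intermediate_value_Icc (by norm_num) (U.continuous.continuousOn)
    have : (1/2 : ℝ) ∈ Icc (U.eval 0) (U.eval 1) := by
      rw [hU0, hU1]; norm_num
    obtain ⟨x₀, hmem, heq⟩ := hsub this
    exact ⟨x₀, hmem, heq⟩
  -- third integral
  have int3 : (∫ x in (0:ℝ)..1, |U.eval x * G.eval x - (1 - U.eval x) * G.eval x|)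
      = (1/2) * ∫ x in (0:ℝ)..1, |G.eval x| := by
    rw [habs]
    have hintabs : ∀ a b : ℝ, IntervalIntegrable
        (fun x => |U.eval x * G.eval x - (1 - U.eval x) * G.eval x|) volume a b := by
      intro a b
      apply Continuous.intervalIntegrable
      exact ((U.continuous.mul G.continuous).sub
        ((continuous_const.sub U.continuous).mul G.continuous)).abs
    have hsplit : (∫ x in (0:ℝ)..1, |U.eval x * G.eval x - (1 - U.eval x) * G.eval x|)
        = (∫ x in (0:ℝ)..x₀, |U.eval x * G.eval x - (1 - U.eval x) * G.eval x|)
          + ∫ x in x₀..1, |U.eval x * G.eval x - (1 - U.eval x) * G.eval x| := by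
      rw [intervalIntegral.integral_add_adjacent_intervals (hintabs 0 x₀) (hintabs x₀ 1)]
    -- left piece
    have hleft : (∫ x in (0:ℝ)..x₀, |U.eval x * G.eval x - (1 - U.eval x) * G.eval x|) = I/4 := by
      have heq : (∫ x in (0:ℝ)..x₀, |U.eval x * G.eval x - (1 - U.eval x) * G.eval x|)
          = ∫ x in (0:ℝ)..x₀, (G.eval x - 2 * (U.eval x * G.eval x)) := by
        apply intervalIntegral.integral_congr
        intro x hx
        rw [uIcc_of_le hx₀mem.1] at hx
        have hxI : x ∈ Icc (0:ℝ) 1 := ⟨hx.1, le_trans hx.2 hx₀mem.2⟩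
        have hUle : U.eval x ≤ 1/2 := by
          have := hmono x hxI x₀ hx₀mem hx.2
          linarith [this, hx₀.le, hx₀.ge]
        show |U.eval x * G.eval x - (1 - U.eval x) * G.eval x|
            = G.eval x - 2 * (U.eval x * G.eval x)
        have : U.eval x * G.eval x - (1 - U.eval x) * G.eval x
            = (2 * U.eval x - 1) * G.eval x := by ring
        rw [this, abs_of_nonpos (mul_nonpos_of_nonpos_of_nonneg (by linarith) (hG0 x hxI))]
        ring
      rw [heq, intervalIntegral.integral_sub (hintG 0 x₀)
        (((hintUG 0 x₀)).const_mul 2), intervalIntegral.integral_const_mul,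
        hftcG, hftcUG, hQ0, hU0]
      have hQx0 : Q.eval x₀ = I * (1/2) := by
        have := hUeval x₀
        rw [hx₀] at this
        field_simp at this ⊢
        linarith
      rw [hQx0, hx₀]
      ring
    -- right piece
    have hright : (∫ x in x₀..1, |U.eval x * G.eval x - (1 - U.eval x) * G.eval x|) = I/4 := by
      have heq : (∫ x in x₀..1, |U.eval x * G.eval x - (1 - U.eval x) * G.eval x|)
          = ∫ x in x₀..1, (2 * (U.eval x * G.eval x) - G.eval x) := by
        apply intervalIntegral.integral_congr
        intro x hx
        rw [uIcc_of_le hx₀mem.2] at hx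
        have hxI : x ∈ Icc (0:ℝ) 1 := ⟨le_trans hx₀mem.1 hx.1, hx.2⟩
        have hUge : 1/2 ≤ U.eval x := by
          have := hmono x₀ hx₀mem x hxI hx.1
          linarith [this, hx₀.le, hx₀.ge]
        show |U.eval x * G.eval x - (1 - U.eval x) * G.eval x|
            = 2 * (U.eval x * G.eval x) - G.eval x
        have : U.eval x * G.eval x - (1 - U.eval x) * G.eval x
            = (2 * U.eval x - 1) * G.eval x := by ring
        rw [this, abs_of_nonneg (mul_nonneg (by linarith) (hG0 x hxI))]
        ring
      rw [heq, intervalIntegral.integral_sub (((hintUG x₀ 1)).const_mul 2) (hintG x₀ 1),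
        intervalIntegral.integral_const_mul, hftcG, hftcUG, hQ1, hU1]
      have hQx0 : Q.eval x₀ = I * (1/2) := by
        have := hUeval x₀
        rw [hx₀] at this
        field_simp at this ⊢
        linarith
      rw [hQx0, hx₀]
      ring
    rw [hsplit, hleft, hright]
    ring
  exact ⟨U, hrange, hdeg, int1, int2, int3⟩
end

section
/- Suppose F : [0,1] → L¹[0,1] satisfies: there is c > 0 and an infinite set of positive integers n such that for every such n and every odd integer i with 1 ≤ i ≤ 2ⁿ − 1, ‖F((i−1)/2ⁿ) + F((i+1)/2ⁿ) − 2F(i/2ⁿ)‖_{L¹} ≥ c·2^{−n}. Then F is nowhere differentiable on [0,1]. -/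
open MeasureTheory Set

noncomputable abbrev mu01 : Measure ℝ := volume.restrict (Icc (0:ℝ) 1)

def HasDerivAtWithin01 {E : Type*} [NormedAddCommGroup E] [NormedSpace ℝ E]
    (F : ℝ → E) (D : E) (t₀ : ℝ) : Prop :=
  ∀ ε > (0:ℝ), ∃ δ > (0:ℝ), ∀ h : ℝ, t₀ + h ∈ Icc (0:ℝ) 1 → |h| < δ →
    ‖F (t₀ + h) - F t₀ - h • D‖ ≤ ε * |h|

set_option maxHeartbeats 1000000 in
/-- If `F : [0,1] → L¹[0,1]` "c-changes direction" at all binary points of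
infinitely many generations, then `F` is nowhere differentiable. -/
theorem c_change_of_direction_implies_nowhere_differentiable
    (F : ℝ → Lp ℝ 1 mu01) (c : ℝ) (hc : 0 < c)
    (S : Set ℕ) (hS : S.Infinite) (hSpos : ∀ n ∈ S, 0 < n)
    (hcd : ∀ n ∈ S, ∀ i : ℕ, Odd i → 1 ≤ i → i ≤ 2 ^ n - 1 →
      c / 2 ^ n ≤ ‖F (((i:ℝ) - 1) / 2 ^ n) + F (((i:ℝ) + 1) / 2 ^ n)
        - (2:ℝ) • F ((i:ℝ) / 2 ^ n)‖) :
    ∀ t₀ ∈ Icc (0:ℝ) 1, ¬ ∃ D : Lp ℝ 1 mu01, HasDerivAtWithin01 F D t₀ := by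
  rintro t₀ ht₀ ⟨D, hD⟩
  have hε : (0:ℝ) < c / 7 := by linarith
  obtain ⟨δ, hδpos, hδ⟩ := hD (c / 7) hε
  -- pick a large n in S
  obtain ⟨N, hN⟩ := pow_unbounded_of_one_lt (2 / δ) (one_lt_two (α := ℝ))
  obtain ⟨n, hnS, hnN⟩ := hS.exists_gt N
  have hn1 : 1 ≤ n := hSpos n hnS
  have hP : (0:ℝ) < 2 ^ n := by positivity
  have h2δ : 2 / (2:ℝ) ^ n < δ := by
    have h1 : (2:ℝ) / δ < 2 ^ n :=
      lt_of_lt_of_le hN (pow_le_pow_right₀ one_le_two hnN.le)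
    rw [div_lt_iff₀ hP]
    rw [div_lt_iff₀ hδpos] at h1
    linarith
  -- choose the dyadic point
  set K : ℕ := 2 ^ (n - 1) with hKdef
  have hK2 : 2 * K = 2 ^ n := by
    rw [hKdef, ← pow_succ']
    congr 1
    omega
  have hK1 : 1 ≤ K := Nat.one_le_two_pow
  set k : ℕ := min (Nat.floor (t₀ * K)) (K - 1) with hkdef
  have hkK : k + 1 ≤ K := by
    have : k ≤ K - 1 := min_le_right _ _
    omega
  have ht₀0 : (0:ℝ) ≤ t₀ := ht₀.1
  have ht₀1 : t₀ ≤ 1 := ht₀.2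
  have hKr : 2 * (K:ℝ) = 2 ^ n := by exact_mod_cast hK2
  have hKrpos : (0:ℝ) < K := by positivity
  -- bounds on t₀ * K
  have hlow : (k:ℝ) ≤ t₀ * K := by
    have h1 : (k:ℝ) ≤ (Nat.floor (t₀ * K) : ℝ) := by
      exact_mod_cast min_le_left _ _
    have h2 : (Nat.floor (t₀ * K) : ℝ) ≤ t₀ * K :=
      Nat.floor_le (by positivity)
    linarith
  have hup : t₀ * K ≤ (k:ℝ) + 1 := by
    rcases le_or_gt (Nat.floor (t₀ * K)) (K - 1) with h | h
    · have hk : k = Nat.floor (t₀ * K) := min_eq_left h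
      have := Nat.lt_floor_add_one (t₀ * K)
      rw [hk]
      push_cast
      linarith
    · have hk : k = K - 1 := min_eq_right (by omega)
      have hcast : (k:ℝ) + 1 = K := by
        rw [hk]
        have : (K - 1) + 1 = K := by omega
        exact_mod_cast congrArg (Nat.cast (R := ℝ)) this
      rw [hcast]
      nlinarith
  set i : ℕ := 2 * k + 1 with hidef
  have hiodd : Odd i := ⟨k, by omega⟩
  have hi1 : 1 ≤ i := by omega
  have hile : i ≤ 2 ^ n - 1 := by omega
  have hkey := hcd n hnS i hiodd hi1 hile
  set P : ℝ := (2:ℝ) ^ n with hPdef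
  have hicast : (i:ℝ) = 2 * (k:ℝ) + 1 := by rw [hidef]; norm_num
  set a : ℝ := ((i:ℝ) - 1) / 2 ^ n with hadef
  set b : ℝ := ((i:ℝ) + 1) / 2 ^ n with hbdef
  set m : ℝ := (i:ℝ) / 2 ^ n with hmdef
  have ha_eq : a = 2 * (k:ℝ) / P + 0 / P := by rw [hadef, hicast]; ring
  have hm_eq : m = 2 * (k:ℝ) / P + 1 / P := by
    rw [hmdef, hicast, ← add_div]
  have hb_eq : b = 2 * (k:ℝ) / P + 2 / P := by
    rw [hbdef, hicast, ← add_div, hPdef]; ring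
  have hinv1 : (0:ℝ) < 1 / P := by positivity
  have h0P : (0:ℝ) / P = 0 := by ring
  have h2P : (2:ℝ) / P = 2 * (1 / P) := by ring
  have h0k : (0:ℝ) ≤ 2 * (k:ℝ) / P := by positivity
  -- t₀ is between a and b
  have hta : 2 * (k:ℝ) / P ≤ t₀ := by
    rw [div_le_iff₀ hP]
    nlinarith
  have htb : t₀ ≤ 2 * (k:ℝ) / P + 2 / P := by
    rw [show 2 * (k:ℝ) / P + 2 / P = (2 * (k:ℝ) + 2) / P from by ring, le_div_iff₀ hP]
    nlinarith
  have hb1 : 2 * (k:ℝ) / P + 2 / P ≤ 1 := by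
    rw [show 2 * (k:ℝ) / P + 2 / P = (2 * (k:ℝ) + 2) / P from by ring, div_le_one hP]
    have : (k:ℝ) + 1 ≤ K := by exact_mod_cast hkK
    nlinarith
  -- memberships
  have haI : a ∈ Icc (0:ℝ) 1 := by
    constructor <;> rw [ha_eq] <;> [positivity; linarith]
  have hmI : m ∈ Icc (0:ℝ) 1 := by
    constructor <;> rw [hm_eq] <;> [positivity; linarith]
  have hbI : b ∈ Icc (0:ℝ) 1 := by
    constructor <;> rw [hb_eq] <;> [positivity; linarith]
  -- distance bounds
  have hda : |a - t₀| ≤ 2 / P := by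
    rw [abs_le, ha_eq, h2P]; constructor <;> linarith
  have hdm : |m - t₀| ≤ 1 / P := by
    rw [abs_le, hm_eq]; constructor <;> linarith
  have hdb : |b - t₀| ≤ 2 / P := by
    rw [abs_le, hb_eq, h2P]; constructor <;> linarith
  have hdaδ : |a - t₀| < δ := lt_of_le_of_lt hda h2δ
  have hdmδ : |m - t₀| < δ := lt_of_le_of_lt (hdm.trans (by linarith [h2P])) h2δ
  have hdbδ : |b - t₀| < δ := lt_of_le_of_lt hdb h2δ
  -- apply differentiability at a, m, b
  have hsuma : t₀ + (a - t₀) = a := by ring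
  have hsumb : t₀ + (b - t₀) = b := by ring
  have hsumm : t₀ + (m - t₀) = m := by ring
  have hEa := hδ (a - t₀) (by rw [hsuma]; exact haI) hdaδ
  have hEb := hδ (b - t₀) (by rw [hsumb]; exact hbI) hdbδ
  have hEm := hδ (m - t₀) (by rw [hsumm]; exact hmI) hdmδ
  rw [hsuma] at hEa
  rw [hsumb] at hEb
  rw [hsumm] at hEm
  -- algebraic identity for the second difference
  have hs : (a - t₀) + (b - t₀) - 2 * (m - t₀) = 0 := by
    rw [hadef, hbdef, hmdef]; ring
  have hid : F a + F b - (2:ℝ) • F m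
      = (F a - F t₀ - (a - t₀) • D) + (F b - F t₀ - (b - t₀) • D)
        - (2:ℝ) • (F m - F t₀ - (m - t₀) • D)
        + ((a - t₀) + (b - t₀) - 2 * (m - t₀)) • D := by
    module
  rw [hs, zero_smul, add_zero] at hid
  -- norm estimate
  have hnorm : ‖F a + F b - (2:ℝ) • F m‖
      ≤ c / 7 * |a - t₀| + c / 7 * |b - t₀| + 2 * (c / 7 * |m - t₀|) := by
    rw [hid]
    calc ‖(F a - F t₀ - (a - t₀) • D) + (F b - F t₀ - (b - t₀) • D)
        - (2:ℝ) • (F m - F t₀ - (m - t₀) • D)‖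
        ≤ ‖(F a - F t₀ - (a - t₀) • D) + (F b - F t₀ - (b - t₀) • D)‖
          + ‖(2:ℝ) • (F m - F t₀ - (m - t₀) • D)‖ := norm_sub_le _ _
      _ ≤ ‖F a - F t₀ - (a - t₀) • D‖ + ‖F b - F t₀ - (b - t₀) • D‖
          + ‖(2:ℝ) • (F m - F t₀ - (m - t₀) • D)‖ := by
            gcongr
            exact norm_add_le _ _
      _ = ‖F a - F t₀ - (a - t₀) • D‖ + ‖F b - F t₀ - (b - t₀) • D‖
          + 2 * ‖F m - F t₀ - (m - t₀) • D‖ := by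
            rw [norm_smul]
            norm_num
      _ ≤ c / 7 * |a - t₀| + c / 7 * |b - t₀| + 2 * (c / 7 * |m - t₀|) := by
            gcongr
  -- final contradiction
  have hε' : (0:ℝ) ≤ c / 7 := hε.le
  have hfin : c / P ≤ c / 7 * (2 / P) + c / 7 * (2 / P) + 2 * (c / 7 * (1 / P)) := by
    refine hkey.trans (hnorm.trans ?_)
    gcongr
  have hlast : c / P ≤ 6 / 7 * (c / P) :=
    hfin.trans_eq (by ring)
  have hpos : (0:ℝ) < c / P := by positivity
  linarith
end

section
/- Let F : [0,1] → L¹[0,1] be a map such that for all binary rationals s ≤ t, 0 ≤ F(s)(x) ≤ F(t)(x) ≤ 1 for a.e. x, and such that for every binary point i/2ⁿ of generation n (i odd), ∫₀¹ (F(i/2ⁿ)(x) − F((i−1)/2ⁿ)(x)) dx = ∫₀¹ (F((i+1)/2ⁿ)(x) − F(i/2ⁿ)(x)) dx, with F(0) = 0 and ∫₀¹ F(1) = 1. Then for all binary rationals s ≤ t, ‖F(t) − F(s)‖_{L¹} = t − s. -/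
open MeasureTheory Set

/-- A binary rational in `[0,1]`: a number of the form `i/2ⁿ` with `0 ≤ i ≤ 2ⁿ`. -/
def IsBinary (t : ℝ) : Prop := ∃ (i n : ℕ), i ≤ 2 ^ n ∧ t = (i : ℝ) / 2 ^ n

/-- If `F` is pointwise monotone with values in `[0,1]` (a.e.), `F(0) = 0`,
`∫₀¹ F(1) = 1`, and at each binary point of generation `n` the graph of
`F(i/2ⁿ)` bisects in area the region between its neighbors, then `F` is an
isometry on binary rationals: `‖F(t) − F(s)‖_{L¹} = t − s` for `s ≤ t`. -/
theorem bisection_gives_isometry_on_binaries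
    (F : ℝ → ℝ → ℝ)
    (hInt : ∀ t : ℝ, IsBinary t → IntegrableOn (F t) (Icc (0:ℝ) 1))
    (hMono : ∀ s t : ℝ, IsBinary s → IsBinary t → s ≤ t →
      ∀ᵐ x ∂(volume.restrict (Icc (0:ℝ) 1)),
        0 ≤ F s x ∧ F s x ≤ F t x ∧ F t x ≤ 1)
    (hBisect : ∀ n : ℕ, ∀ i : ℕ, Odd i → 1 ≤ i → i ≤ 2 ^ n - 1 →
      ∫ x in Icc (0:ℝ) 1, (F ((i:ℝ) / 2 ^ n) x - F (((i:ℝ) - 1) / 2 ^ n) x)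
        = ∫ x in Icc (0:ℝ) 1, (F (((i:ℝ) + 1) / 2 ^ n) x - F ((i:ℝ) / 2 ^ n) x))
    (hF0 : ∀ x, F 0 x = 0)
    (hF1 : ∫ x in Icc (0:ℝ) 1, F 1 x = 1) :
    ∀ s t : ℝ, IsBinary s → IsBinary t → s ≤ t →
      ∫ x in Icc (0:ℝ) 1, |F t x - F s x| = t - s := by
  have hbin : ∀ (i n : ℕ), i ≤ 2 ^ n → IsBinary ((i : ℝ) / 2 ^ n) :=
    fun i n h => ⟨i, n, h, rfl⟩
  have key : ∀ n : ℕ, ∀ i : ℕ, i ≤ 2 ^ n →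
      ∫ x in Icc (0:ℝ) 1, F ((i : ℝ) / 2 ^ n) x = (i : ℝ) / 2 ^ n := by
    intro n
    induction n with
    | zero =>
      intro i hi
      interval_cases i
      · simp [hF0]
      · simpa using hF1
    | succ n ih =>
      have hpow : 2 ^ (n + 1) = 2 * 2 ^ n := by ring
      have heven : ∀ k : ℕ, k ≤ 2 ^ (n + 1) → Even k →
          ∫ x in Icc (0:ℝ) 1, F ((k : ℝ) / 2 ^ (n + 1)) x = (k : ℝ) / 2 ^ (n + 1) := by
        intro k hk hke
        obtain ⟨j, hj⟩ := hke
        have hj' : (k : ℝ) / 2 ^ (n + 1) = (j : ℝ) / 2 ^ n := by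
          subst hj; push_cast; ring
        rw [hj']
        have : (j : ℝ) / 2 ^ n = ((j : ℕ) : ℝ) / 2 ^ n := by norm_num
        rw [hj'.symm, hj']
        exact ih j (by omega)
      intro i hi
      rcases Nat.even_or_odd i with he | ho
      · exact heven i hi he
      · have h1 : 1 ≤ i := ho.pos
        have hne : i ≠ 2 ^ (n + 1) := by
          intro h
          have : Even (2 ^ (n + 1)) := by
            rw [hpow]; exact even_two_mul (2 ^ n)
          rw [h] at ho
          exact (Nat.not_odd_iff_even.mpr this) ho
        have h2 : i ≤ 2 ^ (n + 1) - 1 := by omega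
        have hB := hBisect (n + 1) i ho h1 h2
        have e1 : ((i : ℝ) - 1) = ((i - 1 : ℕ) : ℝ) := by
          have := Nat.cast_sub (R := ℝ) h1
          simp [this]
        have e2 : ((i : ℝ) + 1) = ((i + 1 : ℕ) : ℝ) := by push_cast; ring
        have Ii : IntegrableOn (F ((i : ℝ) / 2 ^ (n + 1))) (Icc 0 1) :=
          hInt _ (hbin i (n + 1) (by omega))
        have Iim : IntegrableOn (F (((i : ℝ) - 1) / 2 ^ (n + 1))) (Icc 0 1) := by
          rw [e1]; exact hInt _ (hbin (i - 1) (n + 1) (by omega))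
        have Iip : IntegrableOn (F (((i : ℝ) + 1) / 2 ^ (n + 1))) (Icc 0 1) := by
          rw [e2]; exact hInt _ (hbin (i + 1) (n + 1) (by omega))
        rw [integral_sub Ii Iim, integral_sub Iip Ii] at hB
        have vm : ∫ x in Icc (0:ℝ) 1, F (((i : ℝ) - 1) / 2 ^ (n + 1)) x
            = ((i : ℝ) - 1) / 2 ^ (n + 1) := by
          rw [e1]
          exact heven (i - 1) (by omega) (Nat.Odd.sub_odd ho odd_one)
        have vp : ∫ x in Icc (0:ℝ) 1, F (((i : ℝ) + 1) / 2 ^ (n + 1)) x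
            = ((i : ℝ) + 1) / 2 ^ (n + 1) := by
          rw [e2]
          exact heven (i + 1) (by omega) (Odd.add_one ho)
        rw [vm, vp] at hB
        have hAB : ((i : ℝ) - 1) / 2 ^ (n + 1) + ((i : ℝ) + 1) / 2 ^ (n + 1)
            = 2 * ((i : ℝ) / 2 ^ (n + 1)) := by ring
        linarith
  have key2 : ∀ t : ℝ, IsBinary t → ∫ x in Icc (0:ℝ) 1, F t x = t := by
    rintro t ⟨i, n, hi, rfl⟩
    exact key n i hi
  intro s t hs ht hst
  have h1 := hMono s t hs ht hst
  have habs : (fun x => |F t x - F s x|) =ᵐ[volume.restrict (Icc (0:ℝ) 1)]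
      fun x => F t x - F s x :=
    h1.mono fun x hx => abs_of_nonneg (by linarith [hx.2.1])
  rw [integral_congr_ae habs, integral_sub (hInt t ht) (hInt s hs), key2 t ht, key2 s hs]
end

section
/- Let G and 𝒰 be as in Lemma on splitting: G a polynomial, G ≥ 0 on [0,1], ∫₀¹ G = ‖G‖_{L¹}, and 𝒰(x) = (1/‖G‖_{L¹})∫₀ˣ G. Let A, B be functions with B − A = G, and define C = 𝒰·A + (1−𝒰)·B. Then ‖A + B − 2C‖_{L¹[0,1]} = ½‖G‖_{L¹[0,1]}. -/
open MeasureTheory Set intervalIntegral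

lemma hasDerivAt_mul_abs (t : ℝ) : HasDerivAt (fun s : ℝ => s * |s|) (2 * |t|) t := by
  rcases eq_or_ne t 0 with rfl | ht
  · simp only [abs_zero, mul_zero]
    rw [hasDerivAt_iff_tendsto_slope]
    have h1 : Filter.Tendsto (fun h : ℝ => |h|) (nhdsWithin 0 {(0:ℝ)}ᶜ) (nhds 0) := by
      have := continuous_abs.tendsto (0:ℝ)
      simpa using this.mono_left nhdsWithin_le_nhds
    apply h1.congr'
    filter_upwards [self_mem_nhdsWithin] with h hh
    have hh' : h ≠ 0 := hh
    rw [slope_def_field]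
    field_simp
    ring
  · have h := (hasDerivAt_id t).mul (hasDerivAt_abs ht)
    refine h.congr_deriv ?_
    rw [id_eq, mul_comm t, sign_mul_self]
    ring

/-- With `G` a nonnegative polynomial on `[0,1]` with positive `L¹`-norm,
`𝒰` its normalized antiderivative, `B − A = G` on `[0,1]`, and
`C = 𝒰A + (1−𝒰)B`, one has `‖A + B − 2C‖_{L¹[0,1]} = ½‖G‖_{L¹[0,1]}`. -/
theorem midfunction_second_difference (G : Polynomial ℝ)
    (hG0 : ∀ x ∈ Icc (0:ℝ) 1, 0 ≤ G.eval x)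
    (hGpos : 0 < ∫ x in (0:ℝ)..1, G.eval x)
    (U : ℝ → ℝ)
    (hU : ∀ x, U x = (∫ t in (0:ℝ)..x, G.eval t) / ∫ x in (0:ℝ)..1, G.eval x)
    (A B C : ℝ → ℝ)
    (hAB : ∀ x ∈ Icc (0:ℝ) 1, B x - A x = G.eval x)
    (hC : ∀ x, C x = U x * A x + (1 - U x) * B x) :
    ∫ x in (0:ℝ)..1, |A x + B x - 2 * C x|
      = (1/2) * ∫ x in (0:ℝ)..1, |G.eval x| := by
  set I : ℝ := ∫ x in (0:ℝ)..1, G.eval x with hI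
  have hIne : I ≠ 0 := ne_of_gt hGpos
  have hgcont : Continuous fun x => G.eval x := G.continuous
  -- derivative of the antiderivative
  have hF : ∀ x : ℝ, HasDerivAt (fun y => ∫ t in (0:ℝ)..y, G.eval t) (G.eval x) x := by
    intro x
    exact intervalIntegral.integral_hasDerivAt_right
      (hgcont.intervalIntegrable 0 x)
      (hgcont.stronglyMeasurableAtFilter _ _)
      hgcont.continuousAt
  have hU' : ∀ x : ℝ, HasDerivAt U (G.eval x / I) x := by
    intro x
    have : U = fun y => (∫ t in (0:ℝ)..y, G.eval t) / I := funext hU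
    rw [this]
    exact (hF x).div_const I
  have hUcont : Continuous U := by
    apply continuous_iff_continuousAt.2
    exact fun x => (hU' x).continuousAt
  -- antiderivative of |2U-1| * g
  set H : ℝ → ℝ := fun x => I * ((2 * U x - 1) * |2 * U x - 1|) / 4 with hHdef
  have hH : ∀ x : ℝ, HasDerivAt H (|2 * U x - 1| * G.eval x) x := by
    intro x
    have h1 : HasDerivAt (fun y => 2 * U y - 1) (2 * (G.eval x / I)) x :=
      ((hU' x).const_mul 2).sub_const 1
    have h2 : HasDerivAt (fun y => (2 * U y - 1) * |2 * U y - 1|)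
        (2 * |2 * U x - 1| * (2 * (G.eval x / I))) x :=
      by have := (hasDerivAt_mul_abs (2 * U x - 1)).comp x h1; exact this
    have h3 := (h2.const_mul I).div_const 4
    refine h3.congr_deriv ?_
    field_simp
    ring
  -- the key integral computation
  have hcont2 : Continuous fun x => |2 * U x - 1| * G.eval x :=
    (((continuous_const.mul hUcont).sub continuous_const).abs).mul hgcont
  have key : (∫ x in (0:ℝ)..1, |2 * U x - 1| * G.eval x) = H 1 - H 0 :=
    intervalIntegral.integral_eq_sub_of_hasDerivAt (fun x _ => hH x)
      (hcont2.intervalIntegrable 0 1)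
  have hU1 : U 1 = 1 := by rw [hU 1]; exact div_self hIne
  have hU0 : U 0 = 0 := by rw [hU 0]; simp
  have hH1 : H 1 = I / 4 := by rw [hHdef]; simp [hU1]; norm_num
  have hH0 : H 0 = -(I / 4) := by
    rw [hHdef]; simp [hU0]; ring
  have key2 : (∫ x in (0:ℝ)..1, |2 * U x - 1| * G.eval x) = I / 2 := by
    rw [key, hH1, hH0]; ring
  -- rewrite the left-hand side
  have hL : (∫ x in (0:ℝ)..1, |A x + B x - 2 * C x|)
      = ∫ x in (0:ℝ)..1, |2 * U x - 1| * G.eval x := by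
    apply intervalIntegral.integral_congr
    intro x hx
    rw [uIcc_of_le (by norm_num : (0:ℝ) ≤ 1)] at hx
    have h1 : A x + B x - 2 * C x = (2 * U x - 1) * G.eval x := by
      rw [hC x, ← hAB x hx]; ring
    simp only [h1, abs_mul, abs_of_nonneg (hG0 x hx)]
  -- rewrite the right-hand side
  have hR : (∫ x in (0:ℝ)..1, |G.eval x|) = I := by
    rw [hI]
    apply intervalIntegral.integral_congr
    intro x hx
    rw [uIcc_of_le (by norm_num : (0:ℝ) ≤ 1)] at hx
    simp only [abs_of_nonneg (hG0 x hx)]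
  rw [hL, key2, hR]
  ring
end

section
/- Let X be a Banach space and F : [0,1] → X a map with the property that for infinitely many n, for every odd i with 1 ≤ i ≤ 2ⁿ−1, ‖F((i−1)/2ⁿ) + F((i+1)/2ⁿ) − 2F(i/2ⁿ)‖ ≥ c·2^{−n} for some fixed c > 0. Then the set of points of differentiability of F in [0,1] is empty; in particular, if X = L¹[0,1], F is a Lipschitz map failing Rademacher-type differentiability everywhere. -/
open Set

set_option maxHeartbeats 1000000 in
/-- If `F : [0,1] → X` (`X` a Banach space) `c`-changes direction at all binary
points of infinitely many generations, then its set of points of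
differentiability in `[0,1]` is empty. -/
theorem set_of_differentiability_points_empty
    {X : Type*} [NormedAddCommGroup X] [NormedSpace ℝ X] [CompleteSpace X]
    (F : ℝ → X) (c : ℝ) (hc : 0 < c)
    (S : Set ℕ) (hS : S.Infinite) (hSpos : ∀ n ∈ S, 0 < n)
    (hcd : ∀ n ∈ S, ∀ i : ℕ, Odd i → 1 ≤ i → i ≤ 2 ^ n - 1 →
      c / 2 ^ n ≤ ‖F (((i:ℝ) - 1) / 2 ^ n) + F (((i:ℝ) + 1) / 2 ^ n)
        - (2:ℝ) • F ((i:ℝ) / 2 ^ n)‖) :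
    {t₀ ∈ Icc (0:ℝ) 1 | ∃ D : X, HasDerivAtWithin01 F D t₀} = ∅ := by
  ext t₀
  simp only [mem_setOf_eq, mem_empty_iff_false, iff_false, not_and, not_exists]
  rintro ⟨ht0, ht1⟩ D hD
  obtain ⟨δ, hδpos, hδ⟩ := hD (c / 11) (by positivity)
  -- choose n ∈ S with 3 / 2 ^ n < δ
  obtain ⟨N, hN⟩ := pow_unbounded_of_one_lt (3 / δ) (one_lt_two (α := ℝ))
  obtain ⟨n, hnS, hnN⟩ := hS.exists_gt N
  have hn1 : 0 < n := hSpos n hnS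
  have hpow : (0:ℝ) < 2 ^ n := by positivity
  have h3δ : 3 / 2 ^ n < δ := by
    rw [div_lt_iff₀ hpow]
    have h1 : (3:ℝ) / δ < 2 ^ N := hN
    have h2 : (2:ℝ) ^ N ≤ 2 ^ n := by
      apply pow_le_pow_right₀ (by norm_num) (le_of_lt hnN)
    have := (div_lt_iff₀ hδpos).mp (lt_of_lt_of_le h1 h2)
    linarith
  -- half power
  have h2half : 2 * 2 ^ (n - 1) = 2 ^ n := by
    rw [← pow_succ']
    congr 1
    omega
  have h2half1 : 1 ≤ 2 ^ (n - 1) := Nat.one_le_two_pow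
  set x : ℝ := t₀ * 2 ^ n with hx
  have hx0 : 0 ≤ x := by positivity
  have hx1 : x ≤ 2 ^ n := by
    rw [hx]
    nlinarith
  set k : ℕ := min (⌊x / 2⌋).toNat (2 ^ (n - 1) - 1) with hk
  set i : ℕ := 2 * k + 1 with hi
  have hiodd : Odd i := ⟨k, by omega⟩
  have hi1 : 1 ≤ i := by omega
  have hile : i ≤ 2 ^ n - 1 := by
    have : k ≤ 2 ^ (n - 1) - 1 := min_le_right _ _
    omega
  -- real bounds on i
  have hfloor0 : (0:ℤ) ≤ ⌊x / 2⌋ := Int.floor_nonneg.mpr (by linarith)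
  have hcastfloor : ((⌊x / 2⌋).toNat : ℝ) = (⌊x / 2⌋ : ℝ) := by
    exact_mod_cast Int.toNat_of_nonneg hfloor0
  have hiub : (i : ℝ) ≤ x + 2 := by
    have hkle : (k : ℝ) ≤ x / 2 := by
      have : (k : ℝ) ≤ ((⌊x / 2⌋).toNat : ℝ) := by
        exact_mod_cast Nat.cast_le.mpr (min_le_left _ _)
      calc (k : ℝ) ≤ ((⌊x / 2⌋).toNat : ℝ) := this
        _ = (⌊x / 2⌋ : ℝ) := hcastfloor
        _ ≤ x / 2 := Int.floor_le _
    push_cast [hi]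
    linarith
  have hilb : x - 2 ≤ (i : ℝ) := by
    rcases min_cases ((⌊x / 2⌋).toNat) (2 ^ (n - 1) - 1) with ⟨hke, _⟩ | ⟨hke, hge⟩
    · have : (x / 2) - 1 < (k : ℝ) := by
        rw [hk, hke, hcastfloor]
        exact Int.sub_one_lt_floor _
      push_cast [hi]
      linarith
    · have hkcast : (k : ℝ) = 2 ^ (n - 1) - 1 := by
        rw [hk, hke]
        push_cast [Nat.cast_sub h2half1]
        ring
      have hpowcast : (2:ℝ) * 2 ^ (n - 1) = 2 ^ n := by
        exact_mod_cast congrArg (Nat.cast : ℕ → ℝ) h2half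
      push_cast [hi]
      rw [hkcast]
      linarith
  have ht0x : t₀ = x / 2 ^ n := by
    field_simp [hx]
    exact hx.symm
  -- the three increments
  set hm : ℝ := ((i : ℝ) - 1) / 2 ^ n - t₀ with hhm
  set hp : ℝ := ((i : ℝ) + 1) / 2 ^ n - t₀ with hhp
  set h0 : ℝ := (i : ℝ) / 2 ^ n - t₀ with hh0
  have hmeq : hm = ((i : ℝ) - 1 - x) / 2 ^ n := by rw [hhm, ht0x]; ring
  have hpeq : hp = ((i : ℝ) + 1 - x) / 2 ^ n := by rw [hhp, ht0x]; ring
  have h0eq : h0 = ((i : ℝ) - x) / 2 ^ n := by rw [hh0, ht0x]; ring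
  have habsm : |hm| ≤ 3 / 2 ^ n := by
    rw [hmeq, abs_div, abs_of_pos hpow]
    gcongr
    rw [abs_le]; constructor <;> linarith
  have habsp : |hp| ≤ 3 / 2 ^ n := by
    rw [hpeq, abs_div, abs_of_pos hpow]
    gcongr
    rw [abs_le]; constructor <;> linarith
  have habs0 : |h0| ≤ 2 / 2 ^ n := by
    rw [h0eq, abs_div, abs_of_pos hpow]
    gcongr
    rw [abs_le]; constructor <;> linarith
  -- membership of the three dyadic points in [0,1]
  have hicast : (1:ℝ) ≤ (i:ℝ) := by exact_mod_cast hi1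
  have hicast2 : (i:ℝ) ≤ 2 ^ n - 1 := by
    have : (i:ℝ) ≤ ((2 ^ n - 1 : ℕ) : ℝ) := by exact_mod_cast hile
    have h1 : ((2 ^ n - 1 : ℕ) : ℝ) = 2 ^ n - 1 := by
      push_cast [Nat.cast_sub (Nat.one_le_two_pow (n := n))]
      norm_num
    linarith [h1 ▸ this]
  have hmemm : t₀ + hm ∈ Icc (0:ℝ) 1 := by
    have he : t₀ + hm = ((i:ℝ) - 1) / 2 ^ n := by rw [hhm]; ring
    rw [he]
    constructor
    · apply div_nonneg (by linarith) hpow.le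
    · rw [div_le_one hpow]; linarith
  have hmemp : t₀ + hp ∈ Icc (0:ℝ) 1 := by
    have he : t₀ + hp = ((i:ℝ) + 1) / 2 ^ n := by rw [hhp]; ring
    rw [he]
    constructor
    · apply div_nonneg (by linarith) hpow.le
    · rw [div_le_one hpow]; linarith
  have hmem0 : t₀ + h0 ∈ Icc (0:ℝ) 1 := by
    have he : t₀ + h0 = (i:ℝ) / 2 ^ n := by rw [hh0]; ring
    rw [he]
    constructor
    · apply div_nonneg (by linarith) hpow.le
    · rw [div_le_one hpow]; linarith
  have em := hδ hm hmemm (lt_of_le_of_lt habsm h3δ)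
  have ep := hδ hp hmemp (lt_of_le_of_lt habsp h3δ)
  have e0 := hδ h0 hmem0 (lt_of_le_of_lt (habs0.trans (by gcongr <;> norm_num)) h3δ)
  -- key algebraic identity
  have hargm : ((i:ℝ) - 1) / 2 ^ n = t₀ + hm := by rw [hhm]; ring
  have hargp : ((i:ℝ) + 1) / 2 ^ n = t₀ + hp := by rw [hhp]; ring
  have harg0 : (i:ℝ) / 2 ^ n = t₀ + h0 := by rw [hh0]; ring
  have hsum : hm + hp = 2 * h0 := by rw [hhm, hhp, hh0]; ring
  have key : F (((i:ℝ) - 1) / 2 ^ n) + F (((i:ℝ) + 1) / 2 ^ n) - (2:ℝ) • F ((i:ℝ) / 2 ^ n)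
      = (F (t₀ + hm) - F t₀ - hm • D) + (F (t₀ + hp) - F t₀ - hp • D)
        - (2:ℝ) • (F (t₀ + h0) - F t₀ - h0 • D) := by
    rw [hargm, hargp, harg0, hhm, hhp, hh0]
    module
  have hbound := hcd n hnS i hiodd hi1 hile
  rw [key] at hbound
  have htri : ‖(F (t₀ + hm) - F t₀ - hm • D) + (F (t₀ + hp) - F t₀ - hp • D)
        - (2:ℝ) • (F (t₀ + h0) - F t₀ - h0 • D)‖
      ≤ ‖F (t₀ + hm) - F t₀ - hm • D‖ + ‖F (t₀ + hp) - F t₀ - hp • D‖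
        + 2 * ‖F (t₀ + h0) - F t₀ - h0 • D‖ := by
    calc _ ≤ ‖(F (t₀ + hm) - F t₀ - hm • D) + (F (t₀ + hp) - F t₀ - hp • D)‖
            + ‖(2:ℝ) • (F (t₀ + h0) - F t₀ - h0 • D)‖ := norm_sub_le _ _
      _ ≤ _ := by
          rw [norm_smul]
          simp only [Real.norm_ofNat]
          linarith [norm_add_le (F (t₀ + hm) - F t₀ - hm • D) (F (t₀ + hp) - F t₀ - hp • D)]
  have hfin : c / 2 ^ n ≤ (c / 11) * (10 / 2 ^ n) := by
    calc c / 2 ^ n ≤ _ := hbound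
      _ ≤ _ := htri
      _ ≤ (c / 11) * |hm| + (c / 11) * |hp| + 2 * ((c / 11) * |h0|) := by linarith
      _ ≤ (c / 11) * (3 / 2 ^ n) + (c / 11) * (3 / 2 ^ n) + 2 * ((c / 11) * (2 / 2 ^ n)) := by
          gcongr <;> positivity
      _ = (c / 11) * (10 / 2 ^ n) := by ring
  rw [div_le_iff₀ hpow] at hfin
  have : (c / 11) * (10 / 2 ^ n) * 2 ^ n = 10 * c / 11 := by field_simp
  rw [this] at hfin
  linarith
end
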